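/- Let G be a finite simple graph and v a vertex of G. For n ≥ 1 let G^2_n be the graph obtained from G by adding a new vertex w adjacent only to v, and then attaching n-1 pendant edges at w (i.e., adding n-1 further new vertices each adjacent only to w). Then there exists N (depending on G) such that for all n ≥ N, the independent set sequence of G^2_n is unimodal. -/

import Mathlib

open Finset Polynomial
open scoped Classical

/-- A finset of vertices is an independent set: pairwise non-adjacent. -/
def IsIndepFinset {V : Type*} (G : SimpleGraph V) (s : Finset V) : Prop :=
  ∀ a ∈ s, ∀ b ∈ s, ¬ G.Adj a b

/-- `indepCount G t` is the number of independent sets of size `t` in `G`. -/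
noncomputable def indepCount {V : Type*} [Fintype V] (G : SimpleGraph V) (t : ℕ) : ℕ :=
  ((Finset.univ : Finset (Finset V)).filter (fun s => IsIndepFinset G s ∧ s.card = t)).card

/-- The independence polynomial of `G`, as a real polynomial:
`p(G,x) = ∑_t i_G(t) x^t`, i.e. the sum of `x^|s|` over all independent sets `s` of `G`. -/
noncomputable def indepPoly {V : Type*} [Fintype V] (G : SimpleGraph V) : Polynomial ℝ :=
  ∑ s ∈ (Finset.univ : Finset (Finset V)).filter (fun s => IsIndepFinset G s),
    (X : Polynomial ℝ) ^ s.card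

/-- A real polynomial is LC⁺ if its coefficients up to its degree are positive and form a
log-concave sequence. -/
def LCPlus (p : Polynomial ℝ) : Prop :=
  (∀ i ≤ p.natDegree, 0 < p.coeff i) ∧
  ∀ k : ℕ, p.coeff k * p.coeff (k + 2) ≤ p.coeff (k + 1) ^ 2

/-- A sequence of naturals is unimodal: it rises to some mode `m` and falls thereafter. -/
def UnimodalNat (a : ℕ → ℕ) : Prop :=
  ∃ m : ℕ, (∀ i j : ℕ, i ≤ j → j ≤ m → a i ≤ a j) ∧ (∀ i j : ℕ, m ≤ i → i ≤ j → a j ≤ a i)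

/-- The `n`-concatenation `G^n(v,w)`: `n` disjoint copies of `G`, with the vertex `w` of the
`i`th copy joined to the vertex `v` of the `(i+1)`st copy. -/
def concat {V : Type*} (G : SimpleGraph V) (v w : V) (n : ℕ) :
    SimpleGraph (V × Fin n) :=
  SimpleGraph.fromRel (fun p q =>
    (p.2 = q.2 ∧ G.Adj p.1 q.1) ∨ (p.1 = w ∧ q.1 = v ∧ (p.2 : ℕ) + 1 = (q.2 : ℕ)))

/-- `G - N[u]`: the induced subgraph of `G` on the vertices outside the closed neighborhood
of `u`. -/
def delNbhd {V : Type*} (G : SimpleGraph V) (u : V) :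
    SimpleGraph {x : V // ¬ (x = u ∨ G.Adj u x)} :=
  G.comap Subtype.val

/-- `attachStar2 G v n` (the graph `G²ₙ`) is obtained from `G` by adding a new vertex
`w = Sum.inr (Sum.inl ())` adjacent only to `v`, and attaching `n - 1` further pendant edges
at `w`. -/
def attachStar2 {V : Type*} (G : SimpleGraph V) (v : V) (n : ℕ) :
    SimpleGraph (V ⊕ (Unit ⊕ Fin (n - 1))) :=
  SimpleGraph.fromRel (fun p q =>
    (∃ a b : V, p = Sum.inl a ∧ q = Sum.inl b ∧ G.Adj a b) ∨
    (p = Sum.inl v ∧ q = Sum.inr (Sum.inl ())) ∨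
    (∃ i : Fin (n - 1), p = Sum.inr (Sum.inl ()) ∧ q = Sum.inr (Sum.inr i)))

namespace AS2

lemma unit_eq_singleton (u : Finset Unit) (h : () ∈ u) : u = {()} := by
  ext x; cases x; simp [h]

lemma unit_eq_empty (u : Finset Unit) (h : () ∉ u) : u = ∅ := by
  ext x; cases x; simp [h]

variable {V : Type*} (G : SimpleGraph V) (v : V) (n : ℕ)

lemma indep_iff (s : Finset (V ⊕ (Unit ⊕ Fin (n-1)))) :
    IsIndepFinset (attachStar2 G v n) s ↔
      (IsIndepFinset G s.toLeft ∧
        (Sum.inr (Sum.inl ()) ∈ s → (Sum.inl v ∉ s ∧ s.toRight.toRight = ∅))) := by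
  constructor
  · intro h
    refine ⟨?_, fun hw => ⟨?_, ?_⟩⟩
    · intro a ha b hb hab
      exact h _ (mem_toLeft.1 ha) _ (mem_toLeft.1 hb)
        ⟨by simp [hab.ne], Or.inl (Or.inl ⟨a, b, rfl, rfl, hab⟩)⟩
    · intro hv
      exact h _ hv _ hw ⟨by simp, Or.inl (Or.inr (Or.inl ⟨rfl, rfl⟩))⟩
    · rw [eq_empty_iff_forall_notMem]
      intro i hi
      have hb : Sum.inr (Sum.inr i) ∈ s := mem_toRight.1 (mem_toRight.1 hi)
      exact h _ hw _ hb ⟨by simp, Or.inl (Or.inr (Or.inr ⟨i, rfl, rfl⟩))⟩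
  · rintro ⟨hL, hw⟩ a ha b hb hadj
    rw [attachStar2, SimpleGraph.fromRel_adj] at hadj
    obtain ⟨hne, hrel | hrel⟩ := hadj
    · rcases hrel with ⟨p, q, rfl, rfl, hpq⟩ | ⟨rfl, rfl⟩ | ⟨i, rfl, rfl⟩
      · exact hL p (mem_toLeft.2 ha) q (mem_toLeft.2 hb) hpq
      · exact (hw hb).1 ha
      · have : i ∈ s.toRight.toRight := mem_toRight.2 (mem_toRight.2 hb)
        simp [(hw ha).2] at this
    · rcases hrel with ⟨p, q, rfl, rfl, hpq⟩ | ⟨rfl, rfl⟩ | ⟨i, rfl, rfl⟩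
      · exact hL p (mem_toLeft.2 hb) q (mem_toLeft.2 ha) hpq
      · exact (hw ha).1 hb
      · have : i ∈ s.toRight.toRight := mem_toRight.2 (mem_toRight.2 ha)
        simp [(hw hb).2] at this

lemma card_split (s : Finset (V ⊕ (Unit ⊕ Fin (n-1)))) :
    s.card = s.toLeft.card + s.toRight.toLeft.card + s.toRight.toRight.card := by
  have h1 := card_toLeft_add_card_toRight (u := s)
  have h2 := card_toLeft_add_card_toRight (u := s.toRight)
  omega

end AS2
section PartAB
open Finset
open scoped Classical
namespace AS2
variable {V : Type*} [Fintype V] (G : SimpleGraph V) (v : V) (n : ℕ)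

noncomputable def cCount : ℕ → ℕ := fun t =>
  ((Finset.univ : Finset (Finset V)).filter
    (fun s => IsIndepFinset G s ∧ v ∉ s ∧ s.card = t)).card

noncomputable def cterm : ℕ → ℕ
  | 0 => 0
  | (t+1) => cCount G v t

lemma partB (t : ℕ) :
    ((Finset.univ : Finset (Finset (V ⊕ (Unit ⊕ Fin (n-1))))).filter
      (fun s => (IsIndepFinset (attachStar2 G v n) s ∧ s.card = t) ∧
        Sum.inr (Sum.inl ()) ∈ s)).card = cterm G v t := by
  have hcard : ((Finset.univ : Finset (Finset (V ⊕ (Unit ⊕ Fin (n-1))))).filter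
      (fun s => (IsIndepFinset (attachStar2 G v n) s ∧ s.card = t) ∧
        Sum.inr (Sum.inl ()) ∈ s)).card
      = ((Finset.univ : Finset (Finset V)).filter
          (fun A => IsIndepFinset G A ∧ v ∉ A ∧ A.card + 1 = t)).card := by
    apply card_nbij' (i := fun s => s.toLeft)
      (j := fun A => A.disjSum ((({()} : Finset Unit)).disjSum (∅ : Finset (Fin (n-1)))))
    · intro s hs
      simp only [mem_coe, mem_filter, mem_univ, true_and] at hs ⊢
      obtain ⟨⟨hind, hcard⟩, hw⟩ := hs
      rw [indep_iff] at hind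
      obtain ⟨hL, himp⟩ := hind
      obtain ⟨hv, hRR⟩ := himp hw
      refine ⟨hL, fun hvv => hv (mem_toLeft.1 hvv), ?_⟩
      have h1 : s.toRight.toLeft = {()} := unit_eq_singleton _ (by
        rw [mem_toLeft, mem_toRight]; exact hw)
      have := card_split (V := V) (n := n) s
      rw [h1, hRR] at this
      simp at this; omega
    · intro A hA
      simp only [mem_coe, mem_filter, mem_univ, true_and] at hA ⊢
      obtain ⟨hind, hv, hcard⟩ := hA
      have hw : Sum.inr (Sum.inl ()) ∈ A.disjSum ((({()} : Finset Unit)).disjSum (∅ : Finset (Fin (n-1)))) := by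
        simp
      refine ⟨⟨?_, ?_⟩, hw⟩
      · rw [indep_iff]
        constructor
        · simpa using hind
        · intro _
          constructor
          · simp [hv]
          · ext i; simp
      · rw [card_disjSum, card_disjSum]
        simp only [card_singleton, card_empty]
        omega
    · intro s hs
      simp only [mem_coe, mem_filter, mem_univ, true_and] at hs
      obtain ⟨⟨hind, hcard⟩, hw⟩ := hs
      rw [indep_iff] at hind
      have hRR := (hind.2 hw).2
      have h1 : s.toRight.toLeft = {()} := unit_eq_singleton _ (by
        rw [mem_toLeft, mem_toRight]; exact hw)
      have : (({()} : Finset Unit)).disjSum (∅ : Finset (Fin (n-1))) = s.toRight := by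
        rw [← h1, ← hRR]; exact toLeft_disjSum_toRight
      rw [this]; exact toLeft_disjSum_toRight
    · intro A hA
      simp
  rw [hcard]
  cases t with
  | zero =>
    simp only [cterm]
    rw [card_eq_zero, filter_eq_empty_iff]
    intro A _; simp
  | succ t =>
    simp only [cterm, cCount]
    congr 1
    apply filter_congr
    intro A _
    simp only [and_congr_right_iff]
    intro _; intro _
    omega

end AS2
end PartAB
section PartA
open Finset
open scoped Classical
namespace AS2
variable {V : Type*} [Fintype V] (G : SimpleGraph V) (v : V) (n : ℕ)

lemma partA (t : ℕ) :
    ((Finset.univ : Finset (Finset (V ⊕ (Unit ⊕ Fin (n-1))))).filter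
      (fun s => (IsIndepFinset (attachStar2 G v n) s ∧ s.card = t) ∧
        ¬ (Sum.inr (Sum.inl ()) ∈ s))).card
    = ∑ k ∈ range (t+1), indepCount G k * (n-1).choose (t-k) := by
  have hcard : ((Finset.univ : Finset (Finset (V ⊕ (Unit ⊕ Fin (n-1))))).filter
      (fun s => (IsIndepFinset (attachStar2 G v n) s ∧ s.card = t) ∧
        ¬ (Sum.inr (Sum.inl ()) ∈ s))).card
      = (((Finset.univ : Finset (Finset V)) ×ˢ (Finset.univ : Finset (Finset (Fin (n-1))))).filter
          (fun z => IsIndepFinset G z.1 ∧ z.1.card + z.2.card = t)).card := by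
    apply card_nbij' (i := fun s => (s.toLeft, s.toRight.toRight))
      (j := fun z => z.1.disjSum ((∅ : Finset Unit).disjSum z.2))
    · intro s hs
      simp only [mem_coe, mem_filter, mem_univ, true_and, mem_product] at hs ⊢
      obtain ⟨⟨hind, hcard⟩, hw⟩ := hs
      rw [indep_iff] at hind
      refine ⟨hind.1, ?_⟩
      have h1 : s.toRight.toLeft = ∅ := unit_eq_empty _ (by
        rw [mem_toLeft, mem_toRight]; exact hw)
      have := card_split (V := V) (n := n) s
      rw [h1] at this; simp at this; omega
    · intro z hz
      simp only [mem_coe, mem_filter, mem_univ, true_and, mem_product] at hz ⊢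
      obtain ⟨hind, hcard⟩ := hz
      refine ⟨⟨?_, ?_⟩, ?_⟩
      · rw [indep_iff]
        refine ⟨by simpa using hind, fun hw => ?_⟩
        exfalso; simpa using hw
      · rw [card_disjSum, card_disjSum]; simpa using hcard
      · simp
    · intro s hs
      simp only [mem_coe, mem_filter, mem_univ, true_and] at hs
      obtain ⟨⟨hind, hcard⟩, hw⟩ := hs
      have h1 : s.toRight.toLeft = ∅ := unit_eq_empty _ (by
        rw [mem_toLeft, mem_toRight]; exact hw)
      have h2 : (∅ : Finset Unit).disjSum s.toRight.toRight = s.toRight := by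
        rw [← h1]; exact toLeft_disjSum_toRight
      simp only [h2]; exact toLeft_disjSum_toRight
    · intro z hz
      refine Prod.ext (by simp) ?_
      show (z.1.disjSum ((∅ : Finset Unit).disjSum z.2)).toRight.toRight = z.2
      ext x
      simp [Finset.mem_toRight]
  rw [hcard]
  have hsplit : (((Finset.univ : Finset (Finset V)) ×ˢ (Finset.univ : Finset (Finset (Fin (n-1))))).filter
          (fun z => IsIndepFinset G z.1 ∧ z.1.card + z.2.card = t))
      = (range (t+1)).biUnion (fun k =>
          ((Finset.univ : Finset (Finset V)).filter
            (fun A => IsIndepFinset G A ∧ A.card = k)) ×ˢ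
          (powersetCard (t-k) (Finset.univ : Finset (Fin (n-1))))) := by
    ext z
    simp only [mem_filter, mem_product, mem_univ, true_and, mem_biUnion, mem_range,
      mem_powersetCard]
    constructor
    · rintro ⟨hind, hcard⟩
      exact ⟨z.1.card, by omega, ⟨hind, rfl⟩, subset_univ _, by omega⟩
    · rintro ⟨k, hk, ⟨hind, hc1⟩, _, hc2⟩
      exact ⟨hind, by omega⟩
  rw [hsplit, card_biUnion]
  · apply Finset.sum_congr rfl
    intro k hk
    rw [card_product, card_powersetCard]
    simp only [card_univ, Fintype.card_fin]
    rfl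
  · intro k1 h1 k2 h2 hne
    rw [Function.onFun, Finset.disjoint_left]
    rintro z hz1 hz2
    simp only [mem_product, mem_filter, mem_univ, true_and] at hz1 hz2
    exact hne (hz1.1.2 ▸ hz2.1.2 ▸ rfl)

lemma count_eq (t : ℕ) :
    indepCount (attachStar2 G v n) t =
      (∑ k ∈ range (t+1), indepCount G k * (n-1).choose (t-k)) + cterm G v t := by
  rw [indepCount, ← card_filter_add_card_filter_not
    (p := fun s => Sum.inr (Sum.inl ()) ∈ s), filter_filter, filter_filter]
  rw [partA, partB, Nat.add_comm]

end AS2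
end PartA

lemma sqle (B s : ℤ) (h1 : -B ≤ s) (h2 : s ≤ B) : s*s ≤ B*B := by nlinarith
lemma keyInt (B N x y : ℤ) (hB : 0 ≤ B) (hN : 4*B^2 + 8*B + 20 ≤ N)
    (hx1 : N - B ≤ 2*x) (hx2 : 2*x ≤ N + B)
    (hy1 : N - B ≤ 2*y) (hy2 : 2*y ≤ N + B) :
    (N-y)*(N-y-1)*((x+1)*(x+2)) + (N-x)*(N-x-1)*((y+1)*(y+2))
      ≤ 2*((N-x)*(N-y)*((x+2)*(y+2))) := by
  set s : ℤ := 2*x - N with hs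
  set r : ℤ := 2*y - N with hr
  have hss : s*s ≤ B*B := sqle B s (by omega) (by omega)
  have hrr : r*r ≤ B*B := sqle B r (by omega) (by omega)
  have hsr1 : s*r ≤ B*B := by nlinarith
  have hsr2 : -(B*B) ≤ s*r := by nlinarith
  have hNpos : (0:ℤ) < N := by nlinarith
  have key : 0 ≤ 2*N^3 + 10*N^2 - N^2*(s-r)^2 + 8*N - 4*N*(s+r) - 3*N*(s*s+r*r) + 4*N*s*r
      - 4*(s+r) - 2*(s*s+r*r) + 2*s*r := by
    have h1 : N^2*(s-r)^2 ≤ N^2*(4*(B*B)) := by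
      have : (s-r)^2 ≤ 4*(B*B) := by nlinarith
      exact mul_le_mul_of_nonneg_left this (sq_nonneg N)
    have h2 : N*(s*s) ≤ N*(B*B) := mul_le_mul_of_nonneg_left hss hNpos.le
    have h3 : N*(r*r) ≤ N*(B*B) := mul_le_mul_of_nonneg_left hrr hNpos.le
    have h4 : N*(-(B*B)) ≤ N*(s*r) := mul_le_mul_of_nonneg_left hsr2 hNpos.le
    have h5 : N*(s+r) ≤ N*(2*B) := mul_le_mul_of_nonneg_left (by omega) hNpos.le
    have h6 : 2*N^2*N ≥ 2*N^2*(4*B^2+8*B+20) := by nlinarith [sq_nonneg N]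
    nlinarith [sq_nonneg N, hNpos, mul_pos hNpos hNpos]
  have e : 2*N^3 + 10*N^2 - N^2*(s-r)^2 + 8*N - 4*N*(s+r) - 3*N*(s*s+r*r) + 4*N*s*r
      - 4*(s+r) - 2*(s*s+r*r) + 2*s*r
      = 4*(2*((N-x)*(N-y)*((x+2)*(y+2)))
          - ((N-y)*(N-y-1)*((x+1)*(x+2)) + (N-x)*(N-x-1)*((y+1)*(y+2)))) := by
    simp only [hs, hr]; ring
  rw [e] at key; linarith


lemma chooseStepAdd (N k M : ℕ) (h : 2*k+1 + (k+1)*M ≤ N) :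
    N.choose k + M ≤ N.choose (k+1) := by
  have hkN : k ≤ N := by nlinarith
  have e := Nat.choose_succ_right_eq N k
  have hpos : 1 ≤ N.choose k := Nat.choose_pos hkN
  have h2 : (k+1) + (k+1)*M ≤ N - k := by omega
  have hmain : (N.choose k + M) * (k+1) ≤ N.choose (k+1) * (k+1) := by
    rw [e]
    calc (N.choose k + M) * (k+1) = N.choose k * (k+1) + M * (k+1) := by ring
    _ ≤ N.choose k * (k+1) + N.choose k * ((k+1)*M) := by
        have := Nat.mul_le_mul hpos (Nat.le_refl ((k+1)*M))
        have hMk : M * (k+1) ≤ N.choose k * ((k+1)*M) := by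
          calc M * (k+1) = 1 * ((k+1)*M) := by ring
          _ ≤ N.choose k * ((k+1)*M) := Nat.mul_le_mul hpos (Nat.le_refl _)
        omega
    _ = N.choose k * ((k+1) + (k+1)*M) := by ring
    _ ≤ N.choose k * (N - k) := Nat.mul_le_mul_left _ h2
  exact Nat.le_of_mul_le_mul_right hmain (by omega)

lemma chooseStepDown (N k : ℕ) (h : N ≤ 2*k+1) : N.choose (k+1) ≤ N.choose k := by
  have e := Nat.choose_succ_right_eq N k
  have hmain : N.choose (k+1) * (k+1) ≤ N.choose k * (k+1) := by
    rw [e]; exact Nat.mul_le_mul_left _ (by omega)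
  exact Nat.le_of_mul_le_mul_right hmain (by omega)



lemma castChooseStep (N k : ℕ) (hk : k ≤ N) :
    (N.choose (k+1) : ℤ) * ((k:ℤ)+1) = (N.choose k : ℤ) * ((N:ℤ) - k) := by
  have := Nat.choose_succ_right_eq N k
  have h2 : ((N - k : ℕ) : ℤ) = (N:ℤ) - k := by omega
  exact_mod_cast by push_cast [← h2]; exact_mod_cast congrArg (Nat.cast (R := ℤ)) this

lemma chooseLC (B N x y : ℕ) (hN : 4*B^2 + 8*B + 20 ≤ N)
    (hx1 : N ≤ 2*x + B) (hx2 : 2*x ≤ N + B)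
    (hy1 : N ≤ 2*y + B) (hy2 : 2*y ≤ N + B)
    (hxN : x + 2 ≤ N) (hyN : y + 2 ≤ N) :
    N.choose x * N.choose (y+2) + N.choose y * N.choose (x+2)
      ≤ 2 * (N.choose (x+1) * N.choose (y+1)) := by
  have hxN' : x ≤ N := by omega
  have hyN' : y ≤ N := by omega
  zify
  set X : ℤ := (x:ℤ) with hX
  set Y : ℤ := (y:ℤ) with hY
  set Nz : ℤ := (N:ℤ) with hNz
  set cx : ℤ := (N.choose x : ℤ)
  set cy : ℤ := (N.choose y : ℤ)
  set cx1 : ℤ := (N.choose (x+1) : ℤ)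
  set cy1 : ℤ := (N.choose (y+1) : ℤ)
  set cx2 : ℤ := (N.choose (x+2) : ℤ)
  set cy2 : ℤ := (N.choose (y+2) : ℤ)
  have E1 : cx1 * (X+1) = cx * (Nz - X) := castChooseStep N x hxN'
  have E2 : cy1 * (Y+1) = cy * (Nz - Y) := castChooseStep N y hyN'
  have E1' : cx2 * (X+2) = cx1 * (Nz - X - 1) := by
    have := castChooseStep N (x+1) (by omega)
    push_cast at this ⊢; linear_combination this
  have E2' : cy2 * (Y+2) = cy1 * (Nz - Y - 1) := by
    have := castChooseStep N (y+1) (by omega)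
    push_cast at this ⊢; linear_combination this
  have F1 : cx2 * ((X+1)*(X+2)) = cx * ((Nz-X)*(Nz-X-1)) := by
    linear_combination (X+1) * E1' + (Nz - X - 1) * E1
  have F2 : cy2 * ((Y+1)*(Y+2)) = cy * ((Nz-Y)*(Nz-Y-1)) := by
    linear_combination (Y+1) * E2' + (Nz - Y - 1) * E2
  have hD : (0:ℤ) < ((X+1)*(X+2))*((Y+1)*(Y+2)) := by positivity
  rw [← mul_le_mul_iff_of_pos_right hD]
  have eL : (cx * cy2 + cy * cx2) * (((X+1)*(X+2))*((Y+1)*(Y+2)))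
      = cx*cy*((Nz-Y)*(Nz-Y-1)*((X+1)*(X+2)) + (Nz-X)*(Nz-X-1)*((Y+1)*(Y+2))) := by
    linear_combination (cx*(X+1)*(X+2)) * F2 + (cy*(Y+1)*(Y+2)) * F1
  have eR : (2 * (cx1 * cy1)) * (((X+1)*(X+2))*((Y+1)*(Y+2)))
      = cx*cy*(2*((Nz-X)*(Nz-Y)*((X+2)*(Y+2)))) := by
    linear_combination (2*(X+2)*(Y+2)*cy1*(Y+1)) * E1 + (2*(X+2)*(Y+2)*cx*(Nz-X)) * E2
  rw [eL, eR]
  have hBN' : 4*(B:ℤ)^2 + 8*B + 20 ≤ Nz := by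
    rw [hNz]; exact_mod_cast hN
  have hK := keyInt B Nz X Y (by positivity) hBN' (by omega) (by omega) (by omega) (by omega)
  have hcc : (0:ℤ) ≤ cx * cy := by positivity
  exact mul_le_mul_of_nonneg_left hK hcc

section Analytic
open Finset
open scoped Classical
namespace AS2
variable {V : Type*} [Fintype V] (G : SimpleGraph V) (v : V)

lemma chooseStepLt (N k : ℕ) (h : 2*k+2 ≤ N) : N.choose k + 1 ≤ N.choose (k+1) := by
  have e := Nat.choose_succ_right_eq N k
  have hpos : 1 ≤ N.choose k := Nat.choose_pos (by omega)
  have hmain : N.choose k * (k+1) < N.choose (k+1) * (k+1) := by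
    rw [e]
    calc N.choose k * (k+1) < N.choose k * (k+2) := by nlinarith
    _ ≤ N.choose k * (N - k) := Nat.mul_le_mul_left _ (by omega)
  have := Nat.lt_of_mul_lt_mul_right hmain
  omega

lemma indepCount_zero : indepCount G 0 = 1 := by
  rw [indepCount]
  have : (Finset.univ : Finset (Finset V)).filter
      (fun s => IsIndepFinset G s ∧ s.card = 0) = {∅} := by
    ext s
    simp only [mem_filter, mem_univ, true_and, mem_singleton, Finset.card_eq_zero]
    constructor
    · rintro ⟨_, h⟩; exact h
    · rintro rfl
      exact ⟨fun a ha => absurd ha (notMem_empty a), rfl⟩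
  rw [this, card_singleton]

lemma indepCount_eq_zero {j : ℕ} (h : Fintype.card V < j) : indepCount G j = 0 := by
  rw [indepCount, card_eq_zero, filter_eq_empty_iff]
  intro s _
  rintro ⟨-, hc⟩
  have := Finset.card_le_univ s
  omega

lemma indepCount_le (j : ℕ) : indepCount G j ≤ 2 ^ Fintype.card V := by
  rw [indepCount]
  calc _ ≤ (Finset.univ : Finset (Finset V)).card := card_filter_le _ _
  _ = 2 ^ Fintype.card V := by rw [card_univ, Fintype.card_finset]

lemma cterm_le (t : ℕ) : cterm G v t ≤ 2 ^ Fintype.card V := by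
  cases t with
  | zero => simp [cterm]
  | succ t =>
    rw [cterm, cCount]
    calc _ ≤ (Finset.univ : Finset (Finset V)).card := card_filter_le _ _
    _ = 2 ^ Fintype.card V := by rw [card_univ, Fintype.card_finset]

lemma cterm_eq_zero {t : ℕ} (h : Fintype.card V + 2 ≤ t) : cterm G v t = 0 := by
  obtain ⟨t, rfl⟩ : ∃ t', t = t' + 1 := ⟨t - 1, by omega⟩
  rw [cterm, cCount, card_eq_zero, filter_eq_empty_iff]
  intro s _
  rintro ⟨-, -, hc⟩
  have := Finset.card_le_univ s
  omega

/-- The dominant part of the independent set counts. -/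
noncomputable def fA (N t : ℕ) : ℕ := ∑ j ∈ range (t+1), indepCount G j * N.choose (t - j)

lemma fA_pos {N t : ℕ} (h : t ≤ N) : 1 ≤ fA G N t := by
  have h0 : indepCount G 0 * N.choose (t - 0) ≤ fA G N t :=
    Finset.single_le_sum (f := fun j => indepCount G j * N.choose (t - j))
      (fun i _ => Nat.zero_le _) (mem_range.2 (by omega))
  rw [indepCount_zero, one_mul] at h0
  exact le_trans (Nat.choose_pos (by omega)) h0

lemma fA_step (N t m0 : ℕ) (h0 : N.choose t + m0 ≤ N.choose (t+1)) (h1 : 2*t+1 ≤ N) :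
    fA G N t + m0 ≤ fA G N (t+1) := by
  have hsub : ∑ j ∈ range (t+1), (indepCount G j * N.choose (t - j)
      + (if j = 0 then m0 else 0)) ≤ ∑ j ∈ range (t+1), indepCount G j * N.choose (t+1 - j) := by
    apply Finset.sum_le_sum
    intro j hj
    rw [mem_range] at hj
    rcases Nat.eq_zero_or_pos j with rfl | hjpos
    · simp only [if_pos rfl, Nat.sub_zero]
      rw [indepCount_zero, one_mul, one_mul]
      exact h0
    · rw [if_neg (by omega), Nat.add_zero]
      have he : t + 1 - j = (t - j) + 1 := by omega
      rw [he]
      apply Nat.mul_le_mul_left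
      have := chooseStepAdd N (t - j) 0 (by omega)
      omega
  have hdist : ∑ j ∈ range (t+1), (indepCount G j * N.choose (t - j)
      + (if j = 0 then m0 else 0)) = fA G N t + m0 := by
    rw [Finset.sum_add_distrib, Finset.sum_ite_eq' (range (t+1)) 0 (fun _ => m0)]
    rw [if_pos (mem_range.2 (by omega))]
    rfl
  rw [hdist] at hsub
  have hfin : fA G N (t+1) = (∑ j ∈ range (t+1), indepCount G j * N.choose (t+1 - j))
      + indepCount G (t+1) * N.choose (t+1-(t+1)) := by
    rw [fA, Finset.sum_range_succ]
  omega

lemma fA_eventually_zero (N t : ℕ) (h : N + Fintype.card V + 1 ≤ t) : fA G N t = 0 := by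
  rw [fA]
  apply Finset.sum_eq_zero
  intro j hj
  rw [mem_range] at hj
  rcases le_or_gt j (Fintype.card V) with hc | hc
  · rw [Nat.choose_eq_zero_of_lt (by omega), Nat.mul_zero]
  · rw [indepCount_eq_zero G hc, Nat.zero_mul]

lemma fA_repr (N t : ℕ) (h : Fintype.card V ≤ t) :
    fA G N t = ∑ j ∈ range (Fintype.card V + 1), indepCount G j * N.choose (t - j) := by
  rw [fA]
  symm
  apply Finset.sum_subset (Finset.range_subset_range.mpr (by omega))
  intro x _ hnx
  simp only [mem_range, not_lt] at hnx
  rw [indepCount_eq_zero G (by omega), Nat.zero_mul]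

lemma fA_down (N t : ℕ) (hA : Fintype.card V ≤ t) (h : N + 2*Fintype.card V ≤ 2*t) :
    fA G N (t+1) ≤ fA G N t := by
  rw [fA_repr G N t hA, fA_repr G N (t+1) (by omega)]
  apply Finset.sum_le_sum
  intro j hj
  rw [mem_range] at hj
  have he : t + 1 - j = (t - j) + 1 := by omega
  rw [he]
  exact Nat.mul_le_mul_left _ (chooseStepDown N (t - j) (by omega))

end AS2
end Analytic
section LogConcave
open Finset
open scoped Classical
namespace AS2
variable {V : Type*} [Fintype V] (G : SimpleGraph V)

lemma double_sum_sym_le (S : Finset ℕ) (F H : ℕ → ℕ → ℕ)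
    (key : ∀ j ∈ S, ∀ k ∈ S, F j k + F k j ≤ H j k + H k j) :
    ∑ j ∈ S, ∑ k ∈ S, F j k ≤ ∑ j ∈ S, ∑ k ∈ S, H j k := by
  have hgen : ∀ F : ℕ → ℕ → ℕ, 2 * (∑ j ∈ S, ∑ k ∈ S, F j k)
      = ∑ j ∈ S, ∑ k ∈ S, (F j k + F k j) := by
    intro F
    rw [two_mul]
    nth_rewrite 2 [Finset.sum_comm]
    rw [← Finset.sum_add_distrib]
    apply Finset.sum_congr rfl
    intro j _
    rw [← Finset.sum_add_distrib]
  have hF := hgen F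
  have hH := hgen H
  have hle : ∑ j ∈ S, ∑ k ∈ S, (F j k + F k j) ≤ ∑ j ∈ S, ∑ k ∈ S, (H j k + H k j) :=
    Finset.sum_le_sum (fun j hj => Finset.sum_le_sum (fun k hk => key j hj k hk))
  omega

lemma fA_logconcave (N t : ℕ)
    (hN : 4*(2*Fintype.card V+4)^2 + 8*(2*Fintype.card V+4) + 20 ≤ N)
    (h1 : N ≤ 2*t+2) (h2 : 2*t ≤ N + 2*Fintype.card V + 2) :
    fA G N t * fA G N (t+2) ≤ fA G N (t+1) * fA G N (t+1) := by
  have hAt : Fintype.card V ≤ t := by nlinarith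
  rw [fA_repr G N t hAt, fA_repr G N (t+1) (by omega), fA_repr G N (t+2) (by omega),
    Finset.sum_mul_sum, Finset.sum_mul_sum]
  apply double_sum_sym_le
  intro j hj k hk
  rw [mem_range] at hj hk
  have hjt : j ≤ t := by omega
  have hkt : k ≤ t := by omega
  have e1 : t + 2 - k = (t - k) + 2 := by omega
  have e2 : t + 2 - j = (t - j) + 2 := by omega
  have e3 : t + 1 - k = (t - k) + 1 := by omega
  have e4 : t + 1 - j = (t - j) + 1 := by omega
  rw [e1, e2, e3, e4]
  set a := indepCount G
  set x := t - j
  set y := t - k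
  have hx1 : N ≤ 2*x + (2*Fintype.card V+4) := by omega
  have hx2 : 2*x ≤ N + (2*Fintype.card V+4) := by omega
  have hy1 : N ≤ 2*y + (2*Fintype.card V+4) := by omega
  have hy2 : 2*y ≤ N + (2*Fintype.card V+4) := by omega
  have hxN : x + 2 ≤ N := by nlinarith
  have hyN : y + 2 ≤ N := by nlinarith
  have hkey := chooseLC (2*Fintype.card V+4) N x y hN hx1 hx2 hy1 hy2 hxN hyN
  calc a j * N.choose x * (a k * N.choose (y+2)) + a k * N.choose y * (a j * N.choose (x+2))
      = (a j * a k) * (N.choose x * N.choose (y+2) + N.choose y * N.choose (x+2)) := by ring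
  _ ≤ (a j * a k) * (2 * (N.choose (x+1) * N.choose (y+1))) := Nat.mul_le_mul_left _ hkey
  _ = a j * N.choose (x+1) * (a k * N.choose (y+1)) + a k * N.choose (y+1) * (a j * N.choose (x+1)) := by ring

end AS2
end LogConcave
section MainAsm
open Finset AS2
open scoped Classical
namespace AS2

lemma upchain (g : ℕ → ℕ) (m : ℕ) (h : ∀ t, t < m → g t ≤ g (t+1)) :
    ∀ i j : ℕ, i ≤ j → j ≤ m → g i ≤ g j := by
  intro i j hij hjm
  induction j with
  | zero => have : i = 0 := by omega
            subst this; exact le_refl _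
  | succ j ih =>
    rcases Nat.lt_or_ge i (j+1) with hlt | hge
    · exact le_trans (ih (by omega) (by omega)) (h j (by omega))
    · have : i = j + 1 := by omega
      subst this; exact le_refl _

lemma downchain (g : ℕ → ℕ) (m : ℕ) (h : ∀ t, m ≤ t → g (t+1) ≤ g t) :
    ∀ i j : ℕ, m ≤ i → i ≤ j → g j ≤ g i := by
  intro i j hmi hij
  induction j with
  | zero => have : i = 0 := by omega
            subst this; exact le_refl _
  | succ j ih =>
    rcases Nat.lt_or_ge i (j+1) with hlt | hge
    · exact le_trans (h j (by omega)) (ih (by omega))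
    · have : i = j + 1 := by omega
      subst this; exact le_refl _

end AS2

private theorem attachStar2_indepSeq_unimodal_aux {V : Type*} [Fintype V] (G : SimpleGraph V) (v : V) :
    ∃ N : ℕ, ∀ n : ℕ, N ≤ n → UnimodalNat (indepCount (attachStar2 G v n)) := by
  classical
  refine ⟨4*(2*Fintype.card V+4)^2 + 8*(2*Fintype.card V+4) + 20
    + (2*Fintype.card V + 3 + (Fintype.card V+2) * 2^(Fintype.card V)) + 1, fun n hn => ?_⟩
  set A := Fintype.card V with hA
  set N := n - 1 with hNdef
  have hNsum : 4*(2*A+4)^2 + 8*(2*A+4) + 20 + (2*A + 3 + (A+2) * 2^A) ≤ N := by omega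
  have hsq1 : 2*A + 5 ≤ 4*(2*A+4)^2 := by nlinarith
  have hNa : 4*(2*A+4)^2 + 8*(2*A+4) + 20 ≤ N := by omega
  have hNb : 2*A + 3 + (A+2) * 2^A ≤ N := by omega
  -- the mode of fA
  have hex : ∃ t, fA G N (t+1) ≤ fA G N t :=
    ⟨N+A+1, by rw [fA_eventually_zero G N (N+A+2) (by omega)]; exact Nat.zero_le _⟩
  set m := Nat.find hex with hm
  have hms : fA G N (m+1) ≤ fA G N m := Nat.find_spec hex
  have hlt : ∀ t, t < m → fA G N t < fA G N (t+1) := by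
    intro t ht
    have := Nat.find_min hex ht
    omega
  have hml : N ≤ 2*m + 1 := by
    by_contra hc
    push_neg at hc
    have := fA_step G N m 1 (chooseStepLt N m (by omega)) (by omega)
    omega
  have hmA : A + 2 ≤ m := by omega
  have hdec : ∀ t, m ≤ t → fA G N (t+1) ≤ fA G N t := by
    intro t ht
    induction t, ht using Nat.le_induction with
    | base => exact hms
    | succ t hmt IH =>
      by_cases hcase : N + 2*A ≤ 2*(t+1)
      · exact fA_down G N (t+1) (by omega) hcase
      · have hlc := fA_logconcave G N t hNa (by omega) (by omega)
        have htN : t ≤ N := by omega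
        have hpos : 1 ≤ fA G N t := fA_pos G htN
        have hstep2 : fA G N (t+1) * fA G N (t+1) ≤ fA G N (t+1) * fA G N t :=
          Nat.mul_le_mul_left _ IH
        have hchain : fA G N t * fA G N (t+2) ≤ fA G N t * fA G N (t+1) := by
          calc fA G N t * fA G N (t+2) ≤ fA G N (t+1) * fA G N (t+1) := hlc
          _ ≤ fA G N (t+1) * fA G N t := hstep2
          _ = fA G N t * fA G N (t+1) := Nat.mul_comm _ _
        exact Nat.le_of_mul_le_mul_left hchain (by omega)
  have hcount : ∀ t, indepCount (attachStar2 G v n) t = fA G N t + AS2.cterm G v t := by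
    intro t
    rw [AS2.count_eq G v n t, hNdef]
    rfl
  refine ⟨m, ?_, ?_⟩
  · apply AS2.upchain _ m
    intro t ht
    rw [hcount t, hcount (t+1)]
    by_cases hsm : t ≤ A + 1
    · have hmul : (t+1) * 2^A ≤ (A+2) * 2^A := Nat.mul_le_mul_right _ (by omega)
      have hmargin := fA_step G N t (2^A)
        (chooseStepAdd N t (2^A) (by omega)) (by omega)
      have hc1 : AS2.cterm G v t ≤ 2^A := AS2.cterm_le G v t
      omega
    · have h0 : AS2.cterm G v t = 0 := AS2.cterm_eq_zero G v (by omega)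
      have h1 : AS2.cterm G v (t+1) = 0 := AS2.cterm_eq_zero G v (by omega)
      have := (hlt t ht).le
      omega
  · apply AS2.downchain _ m
    intro t ht
    rw [hcount t, hcount (t+1)]
    have h0 : AS2.cterm G v t = 0 := AS2.cterm_eq_zero G v (by omega)
    have h1 : AS2.cterm G v (t+1) = 0 := AS2.cterm_eq_zero G v (by omega)
    have := hdec t ht
    omega
end MainAsm

/-- For any finite graph `G`, any vertex `v`, and all sufficiently large `n`, the graph `G²ₙ`
obtained from `G` by attaching a star with `n` leaves at `v` via one of its leaves has
unimodal independent set sequence. -/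
theorem attachStar2_indepSeq_unimodal {V : Type*} [Fintype V] (G : SimpleGraph V) (v : V) :
    ∃ N : ℕ, ∀ n : ℕ, N ≤ n → UnimodalNat (indepCount (attachStar2 G v n)) :=
  attachStar2_indepSeq_unimodal_aux G v
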